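/- Tightness of the additive-to-relative conversion: for n ≥ 2, t ≥ 1, and 0 < ε < 1, the mixture M = (1 − ε/2)·H_t + (ε/2)·|ψ⟩⟨ψ|^{⊗t} (for any fixed unit vector ψ ∈ ℂ^{2^n}) satisfies ‖M − H_t‖₁ ≤ ε, yet M is NOT a relative ε'-approximate state t-design for any ε' < dim(Sym_{N,t})·ε/3; explicitly, Tr(Π_ψ M) > (1+ε')·Tr(Π_ψ H_t) where Π_ψ = |ψ⟩⟨ψ|^{⊗t}. -/

import Mathlib

open Matrix ComplexOrder

/-- The operator on `(ℂ^N)^{⊗t}` permuting the tensor factors according to `π`. -/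
noncomputable def permOp (N t : ℕ) (π : Equiv.Perm (Fin t)) :
    Matrix (Fin t → Fin N) (Fin t → Fin N) ℂ :=
  fun a b => if a = b ∘ π then 1 else 0

/-- The orthogonal projector onto the symmetric subspace `Sym_{N,t} ⊆ (ℂ^N)^{⊗t}`. -/
noncomputable def symProj (N t : ℕ) : Matrix (Fin t → Fin N) (Fin t → Fin N) ℂ :=
  ((Nat.factorial t : ℂ))⁻¹ • ∑ π : Equiv.Perm (Fin t), permOp N t π

/-- The dimension of the symmetric subspace `Sym_{N,t}`. -/
def dimSym (N t : ℕ) : ℕ := Nat.choose (N + t - 1) t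

/-- The `t`-th moment of the Haar measure on unit vectors of `ℂ^N`:
`H_t = Π_{sym}/dim(Sym_{N,t})`. -/
noncomputable def haarMomentT (N t : ℕ) : Matrix (Fin t → Fin N) (Fin t → Fin N) ℂ :=
  ((dimSym N t : ℂ))⁻¹ • symProj N t

/-- The `t`-fold tensor power `v^{⊗t}` of a vector `v : ℂ^N`. -/
noncomputable def tpow {N t : ℕ} (v : Fin N → ℂ) : (Fin t → Fin N) → ℂ :=
  fun f => ∏ j, v (f j)

/-- The trace norm (Schatten 1-norm) `‖A‖₁ = Tr √(AᴴA)`. -/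
noncomputable def traceNorm {m : Type*} [Fintype m] [DecidableEq m] (A : Matrix m m ℂ) : ℝ :=
  ((Matrix.posSemidef_conjTranspose_mul_self A).1.eigenvectorUnitary.1 *
    diagonal (fun i => ((Real.sqrt ((Matrix.posSemidef_conjTranspose_mul_self A).1.eigenvalues i) : ℝ) : ℂ)) *
    (star (Matrix.posSemidef_conjTranspose_mul_self A).1.eigenvectorUnitary : Matrix m m ℂ)).trace.re

section AuxMat

variable {I : Type*} [Fintype I] [DecidableEq I]

set_option linter.unusedSectionVars false

lemma aux_vecMulVec_mul (u w : I → ℂ) (A : Matrix I I ℂ) :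
    vecMulVec u w * A = vecMulVec u (w ᵥ* A) := by
  ext a b
  simp only [Matrix.mul_apply, vecMulVec_apply, Matrix.vecMul, dotProduct]
  rw [Finset.mul_sum]
  exact Finset.sum_congr rfl fun c _ => by ring

lemma aux_mul_vecMulVec (u w : I → ℂ) (A : Matrix I I ℂ) :
    A * vecMulVec u w = vecMulVec (A *ᵥ u) w := by
  ext a b
  simp only [Matrix.mul_apply, vecMulVec_apply, Matrix.mulVec, dotProduct]
  rw [Finset.sum_mul]
  exact Finset.sum_congr rfl fun c _ => by ring

lemma aux_vecMulVec_mul_vecMulVec (u w x y : I → ℂ) :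
    vecMulVec u w * vecMulVec x y = (w ⬝ᵥ x) • vecMulVec u y := by
  ext a b
  simp only [Matrix.mul_apply, vecMulVec_apply, Matrix.smul_apply, dotProduct, smul_eq_mul]
  rw [Finset.sum_mul]
  exact Finset.sum_congr rfl fun c _ => by ring

lemma aux_trace_vecMulVec_mul (u w : I → ℂ) (A : Matrix I I ℂ) :
    (vecMulVec u w * A).trace = w ⬝ᵥ (A *ᵥ u) := by
  simp only [Matrix.trace, Matrix.diag, Matrix.mul_apply, vecMulVec_apply, dotProduct,
    Matrix.mulVec]
  rw [Finset.sum_comm]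
  exact Finset.sum_congr rfl fun b _ => by
    rw [Finset.mul_sum]
    exact Finset.sum_congr rfl fun a _ => by ring

lemma aux_trace_vecMulVec (u w : I → ℂ) : (vecMulVec u w).trace = w ⬝ᵥ u := by
  simp only [Matrix.trace, Matrix.diag, vecMulVec_apply, dotProduct]
  exact Finset.sum_congr rfl fun a _ => mul_comm _ _

lemma aux_conjTranspose_vecMulVec (u w : I → ℂ) :
    (vecMulVec u w)ᴴ = vecMulVec (star w) (star u) := by
  ext a b
  simp only [Matrix.conjTranspose_apply, vecMulVec_apply, Pi.star_apply]
  exact StarMul.star_mul _ _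

lemma aux_vecMulVec_mulVec (u w x : I → ℂ) :
    vecMulVec u w *ᵥ x = (w ⬝ᵥ x) • u := by
  funext a
  simp only [Matrix.mulVec, vecMulVec_apply, dotProduct, Pi.smul_apply, smul_eq_mul]
  rw [Finset.sum_mul]
  exact Finset.sum_congr rfl fun c _ => by ring

lemma aux_posSemidef_vecMulVec (u : I → ℂ) : (vecMulVec u (star u)).PosSemidef := by
  rw [Matrix.posSemidef_iff_dotProduct_mulVec]
  constructor
  · show (vecMulVec u (star u))ᴴ = _
    rw [aux_conjTranspose_vecMulVec, star_star]
  · intro x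
    rw [aux_vecMulVec_mulVec, dotProduct_smul, smul_eq_mul]
    have h1 : star x ⬝ᵥ u = star (star u ⬝ᵥ x) := star_dotProduct x u
    rw [h1]
    exact mul_star_self_nonneg _

lemma aux_posSemidef_real_smul {A : Matrix I I ℂ} (hA : A.PosSemidef) {r : ℝ} (hr : 0 ≤ r) :
    (r • A).PosSemidef := by
  rw [Matrix.posSemidef_iff_dotProduct_mulVec]
  constructor
  · show (r • A)ᴴ = _
    rw [Matrix.conjTranspose_smul, star_trivial, hA.isHermitian.eq]
  · intro x
    rw [Matrix.smul_mulVec, dotProduct_smul]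
    have h0 : (0 : ℂ) ≤ (r : ℂ) := by exact_mod_cast Complex.zero_le_real.mpr hr
    calc (0:ℂ) = (r:ℂ) * 0 := by ring
    _ ≤ (r:ℂ) * (star x ⬝ᵥ (A *ᵥ x)) := by
        apply mul_le_mul_of_nonneg_left (hA.dotProduct_mulVec_nonneg x) h0
    _ = r • (star x ⬝ᵥ (A *ᵥ x)) := by rw [Complex.real_smul]

lemma aux_posSemidef_of_herm_idem {A : Matrix I I ℂ} (h1 : Aᴴ = A) (h2 : A * A = A) :
    A.PosSemidef := by
  refine Matrix.posSemidef_iff_dotProduct_mulVec.mpr ⟨h1, fun x => ?_⟩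
  have h3 : A *ᵥ x = A *ᵥ (A *ᵥ x) := by rw [Matrix.mulVec_mulVec, h2]
  rw [h3, Matrix.dotProduct_mulVec]
  have h4 : star x ᵥ* A = star (A *ᵥ x) := by rw [Matrix.star_mulVec, h1]
  rw [h4]
  exact dotProduct_star_self_nonneg _

lemma aux_sum_mulVec {ι : Type*} (s : Finset ι) (f : ι → Matrix I I ℂ) (v : I → ℂ) :
    (∑ i ∈ s, f i) *ᵥ v = ∑ i ∈ s, f i *ᵥ v := by
  funext a
  simp only [Matrix.mulVec, dotProduct, Finset.sum_apply, Matrix.sum_apply, Finset.sum_mul]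
  rw [Finset.sum_comm]

end AuxMat
section PermOp

set_option linter.unusedSectionVars false

variable {N t : ℕ}

lemma aux_permOp_cond (π : Equiv.Perm (Fin t)) (a b : Fin t → Fin N) :
    a = b ∘ ⇑π ↔ b = a ∘ ⇑π⁻¹ := by
  constructor
  · rintro rfl; funext x; simp
  · rintro rfl; funext x; simp

lemma aux_permOp_mulVec (π : Equiv.Perm (Fin t)) (v : Fin N → ℂ) :
    permOp N t π *ᵥ tpow v = tpow (t := t) v := by
  funext a
  simp only [permOp, Matrix.mulVec, dotProduct, ite_mul, one_mul, zero_mul]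
  simp only [aux_permOp_cond π a]
  rw [Finset.sum_ite_eq' Finset.univ (a ∘ ⇑π⁻¹) (fun b => tpow v b)]
  simp only [Finset.mem_univ, if_true]
  show ∏ j, v (a (π⁻¹ j)) = ∏ j, v (a j)
  exact Equiv.prod_comp π⁻¹ (fun j => v (a j))

lemma aux_permOp_mul (π ρ : Equiv.Perm (Fin t)) :
    permOp N t π * permOp N t ρ = permOp N t (ρ * π) := by
  ext a c
  simp only [permOp, Matrix.mul_apply, ite_mul, one_mul, zero_mul]
  simp only [aux_permOp_cond π a]
  rw [Finset.sum_ite_eq' Finset.univ (a ∘ ⇑π⁻¹) (fun b => if b = c ∘ ⇑ρ then (1:ℂ) else 0)]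
  simp only [Finset.mem_univ, if_true]
  congr 1
  apply propext
  constructor
  · intro h
    funext x
    have := congrFun h (π x)
    simpa using this
  · rintro rfl
    funext x
    simp [Function.comp]

lemma aux_permOp_conjTranspose (π : Equiv.Perm (Fin t)) :
    (permOp N t π)ᴴ = permOp N t π⁻¹ := by
  ext a b
  simp only [Matrix.conjTranspose_apply, permOp]
  simp only [aux_permOp_cond π b a]
  split <;> simp

lemma aux_symProj_conjTranspose : (symProj N t)ᴴ = symProj N t := by
  rw [symProj, Matrix.conjTranspose_smul, Matrix.conjTranspose_sum]
  congr 1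
  · rw [star_inv₀]
    congr 1
    exact star_natCast _
  · simp only [aux_permOp_conjTranspose]
    exact Fintype.sum_equiv (Equiv.inv (Equiv.Perm (Fin t))) _ _ (fun π => rfl)

lemma aux_symProj_idem : symProj N t * symProj N t = symProj N t := by
  have hcard : Fintype.card (Equiv.Perm (Fin t)) = Nat.factorial t := by
    rw [Fintype.card_perm, Fintype.card_fin]
  have hne : ((Nat.factorial t : ℂ)) ≠ 0 := by
    exact_mod_cast Nat.cast_ne_zero.mpr (Nat.factorial_ne_zero t)
  rw [symProj, Matrix.smul_mul, Matrix.mul_smul, smul_smul, Finset.sum_mul]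
  have h1 : ∀ π ∈ Finset.univ, (permOp N t π * ∑ ρ : Equiv.Perm (Fin t), permOp N t ρ)
      = ∑ σ : Equiv.Perm (Fin t), permOp N t σ := by
    intro π _
    rw [Finset.mul_sum]
    simp only [aux_permOp_mul]
    exact Fintype.sum_equiv (Equiv.mulRight π) _ _ (fun ρ => rfl)
  rw [Finset.sum_congr rfl h1, Finset.sum_const, Finset.card_univ, hcard]
  rw [← Nat.cast_smul_eq_nsmul ℂ, smul_smul]
  congr 1
  field_simp

lemma aux_symProj_mulVec (v : Fin N → ℂ) :
    symProj N t *ᵥ tpow (t := t) v = tpow v := by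
  have hcard : Fintype.card (Equiv.Perm (Fin t)) = Nat.factorial t := by
    rw [Fintype.card_perm, Fintype.card_fin]
  have hne : ((Nat.factorial t : ℂ)) ≠ 0 := by
    exact_mod_cast Nat.cast_ne_zero.mpr (Nat.factorial_ne_zero t)
  rw [symProj, Matrix.smul_mulVec, aux_sum_mulVec]
  simp only [aux_permOp_mulVec]
  rw [Finset.sum_const, Finset.card_univ, hcard, ← Nat.cast_smul_eq_nsmul ℂ, smul_smul,
    inv_mul_cancel₀ hne, one_smul]

lemma aux_tpow_dot {N t : ℕ} (v : Fin N → ℂ) (hv : star v ⬝ᵥ v = 1) :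
    star (tpow (t := t) v) ⬝ᵥ tpow v = 1 := by
  unfold tpow
  simp only [dotProduct, Pi.star_apply]
  have h1 : ∀ f : Fin t → Fin N,
      star (∏ j, v (f j)) * ∏ j, v (f j) = ∏ j, (star (v (f j)) * v (f j)) := by
    intro f
    rw [Finset.prod_mul_distrib]
    congr 1
    exact star_prod _ _
  rw [Finset.sum_congr rfl fun f _ => h1 f]
  have hps := Finset.prod_univ_sum (fun _ : Fin t => (Finset.univ : Finset (Fin N)))
    (fun _ i => star (v i) * v i)
  rw [← Fintype.piFinset_univ, ← hps]
  have h2 : ∀ j : Fin t, ∑ i : Fin N, star (v i) * v i = 1 := by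
    intro j
    simpa [dotProduct] using hv
  rw [Finset.prod_congr rfl fun j _ => h2 j, Finset.prod_const_one]

end PermOp
section Burnside

set_option linter.unusedSectionVars false

attribute [local instance] arrowAction

lemma aux_ofFn_perm_iff {t N : ℕ} (a b : Fin t → Fin N) :
    (List.ofFn a).Perm (List.ofFn b) ↔ ∃ σ : Equiv.Perm (Fin t), a = b ∘ ⇑σ := by
  constructor
  · intro h
    have ha := Tuple.monotone_sort a
    have hb := Tuple.monotone_sort b
    have h2 : List.ofFn (a ∘ ⇑(Tuple.sort a)) = List.ofFn (b ∘ ⇑(Tuple.sort b)) :=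
      List.Perm.eq_of_sortedLE ha.sortedLE_ofFn hb.sortedLE_ofFn
        ((((Tuple.sort a).ofFn_comp_perm a).trans h).trans
          ((Tuple.sort b).ofFn_comp_perm b).symm)
    have h3 : a ∘ ⇑(Tuple.sort a) = b ∘ ⇑(Tuple.sort b) := List.ofFn_injective h2
    refine ⟨(Tuple.sort a).symm.trans (Tuple.sort b), ?_⟩
    funext x
    have := congrFun h3 ((Tuple.sort a).symm x)
    simpa using this
  · rintro ⟨σ, rfl⟩
    exact σ.ofFn_comp_perm b

lemma aux_smul_eq {t N : ℕ} (π : Equiv.Perm (Fin t)) (a : Fin t → Fin N) :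
    π • a = a ∘ ⇑π⁻¹ := rfl

noncomputable def orbEquivSym (N t : ℕ) :
    MulAction.orbitRel.Quotient (Equiv.Perm (Fin t)) (Fin t → Fin N) ≃ Sym (Fin N) t := by
  refine Equiv.ofBijective
    (Quotient.lift
      (fun a : Fin t → Fin N =>
        (⟨((List.ofFn a : List (Fin N)) : Multiset (Fin N)), by simp⟩ : Sym (Fin N) t))
      ?_) ⟨?_, ?_⟩
  · intro a b hab
    have hab2 : a ∈ MulAction.orbit (Equiv.Perm (Fin t)) b := hab
    obtain ⟨π, hπ⟩ := MulAction.mem_orbit_iff.mp hab2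
    have : a = b ∘ ⇑π⁻¹ := by rw [← hπ]; rfl
    subst this
    apply Subtype.ext
    simp only
    rw [Multiset.coe_eq_coe]
    exact (π⁻¹).ofFn_comp_perm b
  · intro x y
    induction x using Quotient.inductionOn with
    | h a =>
    induction y using Quotient.inductionOn with
    | h b =>
    intro hxy
    have hxy2 : ((List.ofFn a : List (Fin N)) : Multiset (Fin N)) = (List.ofFn b : List (Fin N)) :=
      congrArg Subtype.val hxy
    rw [Multiset.coe_eq_coe] at hxy2
    obtain ⟨σ, rfl⟩ := (aux_ofFn_perm_iff a b).mp hxy2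
    apply Quotient.sound
    show (b ∘ ⇑σ) ∈ MulAction.orbit (Equiv.Perm (Fin t)) b
    refine MulAction.mem_orbit_iff.mpr ⟨σ⁻¹, ?_⟩
    rw [aux_smul_eq]
    simp
  · rintro ⟨m, hm⟩
    induction m using Quotient.inductionOn with
    | h l =>
    have hl : l.length = t := by simpa using hm
    subst hl
    refine ⟨Quotient.mk _ l.get, ?_⟩
    apply Subtype.ext
    simp only [Quotient.lift_mk]
    show ((List.ofFn l.get : List (Fin N)) : Multiset (Fin N)) = (l : Multiset (Fin N))
    rw [List.ofFn_get]

lemma aux_sum_card_fix (N t : ℕ) :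
    ∑ π : Equiv.Perm (Fin t),
      (Finset.univ.filter (fun a : Fin t → Fin N => a = a ∘ ⇑π)).card
      = dimSym N t * Nat.factorial t := by
  classical
  haveI : ∀ π : Equiv.Perm (Fin t), Fintype (MulAction.fixedBy (Fin t → Fin N) π) :=
    fun _ => Fintype.ofFinite _
  haveI : Fintype (MulAction.orbitRel.Quotient (Equiv.Perm (Fin t)) (Fin t → Fin N)) :=
    Fintype.ofFinite _
  have hb := MulAction.sum_card_fixedBy_eq_card_orbits_mul_card_group
    (Equiv.Perm (Fin t)) (Fin t → Fin N)
  have hfix : ∀ π : Equiv.Perm (Fin t),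
      Fintype.card (MulAction.fixedBy (Fin t → Fin N) π)
        = (Finset.univ.filter (fun a : Fin t → Fin N => a = a ∘ ⇑π)).card := by
    intro π
    rw [Fintype.card_congr (Equiv.subtypeEquivRight (q := fun a : Fin t → Fin N => a = a ∘ ⇑π)
      (fun a => ?_))]
    · exact Fintype.card_subtype _
    · rw [MulAction.mem_fixedBy, aux_smul_eq]
      constructor
      · intro h
        funext x
        have := congrFun h (π x)
        simpa using this
      · intro h
        funext x
        have := congrFun h (π⁻¹ x)
        simpa using this
  rw [Finset.sum_congr rfl fun π _ => (hfix π).symm, hb,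
    Fintype.card_congr (orbEquivSym N t), Sym.card_sym_eq_choose, Fintype.card_fin,
    Fintype.card_perm, Fintype.card_fin]
  rfl

lemma aux_trace_symProj (N t : ℕ) : (symProj N t).trace = (dimSym N t : ℂ) := by
  classical
  have hne : ((Nat.factorial t : ℂ)) ≠ 0 := by
    exact_mod_cast Nat.cast_ne_zero.mpr (Nat.factorial_ne_zero t)
  have h1 : ∀ π : Equiv.Perm (Fin t), (permOp N t π).trace
      = ((Finset.univ.filter (fun a : Fin t → Fin N => a = a ∘ ⇑π)).card : ℂ) := by
    intro π
    rw [Matrix.trace]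
    simp only [Matrix.diag, permOp]
    rw [Finset.sum_boole]
  rw [symProj, Matrix.trace_smul, Matrix.trace_sum,
    Finset.sum_congr rfl fun π _ => h1 π, ← Nat.cast_sum, aux_sum_card_fix]
  push_cast
  rw [smul_eq_mul]
  field_simp

end Burnside
lemma aux_three_le_dimSym {N t : ℕ} (hN : 3 ≤ N) (ht : 1 ≤ t) : 3 ≤ dimSym N t := by
  have h1 : t + 2 ≤ N + t - 1 := by omega
  have h2 : (t + 2).choose t ≤ (N + t - 1).choose t := Nat.choose_le_choose t h1
  have h3 : (t + 2).choose t = (t + 2).choose 2 := by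
    have := Nat.choose_symm (n := t + 2) (k := 2) (by omega)
    simpa using this
  have h4 : Nat.choose 3 2 ≤ (t + 2).choose 2 := Nat.choose_le_choose 2 (by omega)
  have h5 : Nat.choose 3 2 = 3 := by decide
  unfold dimSym
  omega
lemma aux_sqrt_eq {m : Type*} [Fintype m] [DecidableEq m] (A S : Matrix m m ℂ)
    (hS : S.PosSemidef) (h : S ^ 2 = Aᴴ * A) :
    S = (Matrix.posSemidef_conjTranspose_mul_self A).1.eigenvectorUnitary.1 *
    diagonal (fun i => ((Real.sqrt ((Matrix.posSemidef_conjTranspose_mul_self A).1.eigenvalues i) : ℝ) : ℂ)) *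
    (star (Matrix.posSemidef_conjTranspose_mul_self A).1.eigenvectorUnitary : Matrix m m ℂ) := by
  open MatrixOrder in
  have hA := Matrix.posSemidef_conjTranspose_mul_self A
  have h1 : CFC.sqrt (Aᴴ * A) = S := CFC.sqrt_unique (by rw [← h, sq]) hS.nonneg
  rw [← h1, CFC.sqrt_eq_cfc, cfc_nnreal_eq_real _ _ hA.nonneg, hA.1.cfc_eq]
  simp [IsHermitian.cfc, Function.comp_def, hA.eigenvalues_nonneg]

theorem stmt12 (n t : ℕ) (hn : 2 ≤ n) (ht : 1 ≤ t) (ε : ℝ) (hε0 : 0 < ε) (hε1 : ε < 1)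
    (ψ : Fin (2 ^ n) → ℂ) (hψ : star ψ ⬝ᵥ ψ = 1)
    (M : Matrix (Fin t → Fin (2 ^ n)) (Fin t → Fin (2 ^ n)) ℂ)
    (hM : M = (1 - ε / 2) • haarMomentT (2 ^ n) t +
      (ε / 2) • vecMulVec (tpow ψ) (star (tpow ψ))) :
    traceNorm (M - haarMomentT (2 ^ n) t) ≤ ε ∧
      ∀ ε' : ℝ, ε' < (dimSym (2 ^ n) t : ℝ) * ε / 3 →
        (1 + ε') * ((vecMulVec (tpow ψ) (star (tpow (t := t) ψ)) *
            haarMomentT (2 ^ n) t).trace).re <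
          ((vecMulVec (tpow ψ) (star (tpow ψ)) * M).trace).re := by
  have hN3 : 3 ≤ 2 ^ n := by
    have : 2 ^ 2 ≤ 2 ^ n := Nat.pow_le_pow_right (by norm_num) hn
    omega
  have hD3 : 3 ≤ dimSym (2 ^ n) t := aux_three_le_dimSym hN3 ht
  set d : ℝ := (dimSym (2 ^ n) t : ℝ) with hd
  have hd3 : (3 : ℝ) ≤ d := by rw [hd]; exact_mod_cast hD3
  have hd0 : (0 : ℝ) < d := by linarith
  have hinv3 : d⁻¹ ≤ 1/3 := by
    rw [show (1:ℝ)/3 = (3:ℝ)⁻¹ by norm_num]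
    exact inv_anti₀ (by norm_num) hd3
  have hinv0 : (0:ℝ) < d⁻¹ := inv_pos.mpr hd0
  have h1 : d⁻¹ * d = 1 := inv_mul_cancel₀ hd0.ne'
  set u : (Fin t → Fin (2 ^ n)) → ℂ := tpow ψ with hu
  set P := vecMulVec u (star u) with hPdef
  set Q := symProj (2 ^ n) t with hQdef
  have hdot : star u ⬝ᵥ u = 1 := aux_tpow_dot ψ hψ
  have hQu : Q *ᵥ u = u := aux_symProj_mulVec ψ
  have hQherm : Qᴴ = Q := aux_symProj_conjTranspose
  have hQQ : Q * Q = Q := aux_symProj_idem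
  have hstaruQ : star u ᵥ* Q = star u := by
    have h := Matrix.star_mulVec Q u
    rw [hQu, hQherm] at h
    exact h.symm
  have hPP : P * P = P := by rw [hPdef, aux_vecMulVec_mul_vecMulVec, hdot, one_smul]
  have hPQ : P * Q = P := by rw [hPdef, aux_vecMulVec_mul, hstaruQ]
  have hQP : Q * P = P := by rw [hPdef, aux_mul_vecMulVec, hQu]
  have hPherm : Pᴴ = P := by rw [hPdef, aux_conjTranspose_vecMulVec, star_star]
  have hcast : ((d⁻¹ : ℝ) : ℂ) = ((dimSym (2 ^ n) t : ℂ))⁻¹ := by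
    rw [hd]; push_cast; ring
  have hH : haarMomentT (2 ^ n) t = d⁻¹ • Q := by
    rw [haarMomentT, ← hQdef, ← hcast]
    ext i j
    simp [Complex.real_smul]
  have hX : M - haarMomentT (2 ^ n) t = (ε / 2) • (P - d⁻¹ • Q) := by
    rw [hM, hH]; module
  have expand : ∀ x y : ℝ, ((x • P + y • Q) * (x • P + y • Q))
      = (x*x + (x*y + y*x)) • P + (y*y) • Q := by
    intro x y
    rw [Matrix.add_mul, Matrix.mul_add, Matrix.mul_add]
    simp only [Matrix.smul_mul, Matrix.mul_smul, hPP, hPQ, hQP, hQQ, smul_smul]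
    module
  have hPmQ : P - d⁻¹ • Q = (1:ℝ) • P + (-d⁻¹) • Q := by module
  set S : Matrix (Fin t → Fin (2 ^ n)) (Fin t → Fin (2 ^ n)) ℂ :=
    (ε/2) • ((1 - 2*d⁻¹) • P + d⁻¹ • Q) with hS
  have hXherm : (M - haarMomentT (2 ^ n) t)ᴴ = M - haarMomentT (2 ^ n) t := by
    rw [hX, Matrix.conjTranspose_smul, star_trivial, Matrix.conjTranspose_sub,
      Matrix.conjTranspose_smul, star_trivial, hPherm, hQherm]
  have hinner : ((1 - 2*d⁻¹) • P + d⁻¹ • Q) * ((1 - 2*d⁻¹) • P + d⁻¹ • Q)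
      = ((1:ℝ) • P + (-d⁻¹) • Q) * ((1:ℝ) • P + (-d⁻¹) • Q) := by
    rw [expand, expand]
    congr 1
    · congr 1
      ring
    · congr 1
      ring
  have hsq : S ^ 2 = (M - haarMomentT (2 ^ n) t)ᴴ * (M - haarMomentT (2 ^ n) t) := by
    rw [hXherm, hX, hPmQ, pow_two, hS]
    rw [Matrix.smul_mul, Matrix.mul_smul, Matrix.smul_mul, Matrix.mul_smul, hinner]
  have hSpsd : S.PosSemidef := by
    apply aux_posSemidef_real_smul _ (by linarith : (0:ℝ) ≤ ε/2)
    apply Matrix.PosSemidef.add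
    · exact aux_posSemidef_real_smul (aux_posSemidef_vecMulVec u) (by nlinarith)
    · exact aux_posSemidef_real_smul (aux_posSemidef_of_herm_idem hQherm hQQ) hinv0.le
  have hsqrt_eq := aux_sqrt_eq (M - haarMomentT (2 ^ n) t) S hSpsd hsq
  have htrP : P.trace = 1 := by rw [hPdef, aux_trace_vecMulVec, hdot]
  have htrQ : Q.trace = (dimSym (2 ^ n) t : ℂ) := aux_trace_symProj _ _
  have hdc : (dimSym (2 ^ n) t : ℂ) = ((d : ℝ) : ℂ) := by rw [hd]; push_cast; ring
  have htrS : S.trace = (((ε/2) * ((1 - 2*d⁻¹) + d⁻¹ * d) : ℝ) : ℂ) := by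
    rw [hS, Matrix.trace_smul, Matrix.trace_add, Matrix.trace_smul, Matrix.trace_smul,
      htrP, htrQ, hdc]
    simp only [Complex.real_smul, smul_eq_mul]
    push_cast
    ring
  constructor
  · rw [traceNorm, ← hsqrt_eq, htrS, Complex.ofReal_re, h1]
    nlinarith [mul_nonneg hε0.le hinv0.le]
  · intro ε' hε'
    have htr1 : (P * haarMomentT (2 ^ n) t).trace = ((d⁻¹ : ℝ) : ℂ) := by
      rw [hPdef, aux_trace_vecMulVec_mul, hH, Matrix.smul_mulVec, hQu,
        dotProduct_smul, hdot]
      simp [Complex.real_smul]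
    have htr2 : (P * M).trace = (((1 - ε/2) * d⁻¹ + ε/2 : ℝ) : ℂ) := by
      rw [hM, Matrix.mul_add, Matrix.trace_add, Matrix.mul_smul, Matrix.mul_smul,
        Matrix.trace_smul, Matrix.trace_smul, htr1, hPP, htrP]
      simp only [Complex.real_smul, smul_eq_mul]
      push_cast
      ring
    rw [htr1, htr2, Complex.ofReal_re, Complex.ofReal_re]
    have h3 : ε' * d⁻¹ < (d * ε / 3) * d⁻¹ := mul_lt_mul_of_pos_right hε' hinv0
    have h4 : (d * ε / 3) * d⁻¹ = ε / 3 := by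
      field_simp
    nlinarith
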